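/- arXiv:1101.3965 — 3 statements merged into one kernel-verified Lean document; each statement's English description precedes it below -/
import Mathlib

section
/- For every integer k ≥ 1, the function x ↦ (1 − x^{3k/2} − (1−x)^{3k/2}) / √(2π x^3 (1−x)^3) is integrable on (0,1) and ∫_0^1 (1 − x^{3k/2} − (1−x)^{3k/2}) / √(2π x^3 (1−x)^3) dx = 2^{3/2} Γ((3k−1)/2) / Γ(3k/2 − 1). -/
open MeasureTheory Real Set Filter Topology

lemma my_beta (p q : ℝ) (hp : -1 < p) (hq : -1 < q) :
    IntegrableOn (fun x : ℝ => x ^ p * (1 - x) ^ q) (Set.Ioo 0 1) ∧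
    ∫ x in Set.Ioo (0:ℝ) 1, x ^ p * (1 - x) ^ q
      = Real.Gamma (p+1) * Real.Gamma (q+1) / Real.Gamma (p+q+2) := by
  have hu : (0:ℝ) < (((p:ℂ)+1).re) := by simp; linarith
  have hv : (0:ℝ) < (((q:ℂ)+1).re) := by simp; linarith
  have hconv := Complex.betaIntegral_convergent hu hv
  have hEq : ∀ x ∈ Set.Icc (0:ℝ) 1,
      ((x : ℂ)) ^ ((p:ℂ)+1-1) * (1 - (x:ℂ)) ^ ((q:ℂ)+1-1)
        = ((x ^ p * (1-x) ^ q : ℝ) : ℂ) := by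
    intro x hx
    rw [Complex.ofReal_mul, Complex.ofReal_cpow hx.1, Complex.ofReal_cpow (by linarith [hx.2])]
    push_cast
    ring_nf
  have hIoo : IntegrableOn (fun x : ℝ =>
      ((x : ℂ)) ^ ((p:ℂ)+1-1) * (1 - (x:ℂ)) ^ ((q:ℂ)+1-1)) (Set.Ioo 0 1) :=
    (intervalIntegrable_iff_integrableOn_Ioo_of_le zero_le_one).mp hconv
  have hint : IntegrableOn (fun x : ℝ => x ^ p * (1 - x) ^ q) (Set.Ioo 0 1) := by
    have h2 : IntegrableOn (fun x : ℝ =>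
        (((x : ℂ)) ^ ((p:ℂ)+1-1) * (1 - (x:ℂ)) ^ ((q:ℂ)+1-1)).re) (Set.Ioo 0 1) := hIoo.re
    refine h2.congr_fun (fun x hx => ?_) measurableSet_Ioo
    have := hEq x ⟨hx.1.le, hx.2.le⟩
    simp only []; rw [this, Complex.ofReal_re]
  refine ⟨hint, ?_⟩
  have hval := Complex.Gamma_mul_Gamma_eq_betaIntegral hu hv
  have hbeta : Complex.betaIntegral ((p:ℂ)+1) ((q:ℂ)+1)
      = ((∫ x in Set.Ioo (0:ℝ) 1, x ^ p * (1-x) ^ q : ℝ) : ℂ) := by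
    rw [Complex.betaIntegral]
    rw [intervalIntegral.integral_congr (g := fun x : ℝ => ((x ^ p * (1-x) ^ q : ℝ) : ℂ))
      (by intro x hx; exact hEq x (by rwa [Set.uIcc_of_le zero_le_one] at hx))]
    rw [intervalIntegral.integral_ofReal]
    norm_num
    rw [intervalIntegral.integral_of_le zero_le_one, MeasureTheory.integral_Ioc_eq_integral_Ioo]
  rw [hbeta] at hval
  have h1 : ((p:ℂ)+1) = ((p+1 : ℝ) : ℂ) := by push_cast; ring
  have h2 : ((q:ℂ)+1) = ((q+1 : ℝ) : ℂ) := by push_cast; ring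
  have h3 : ((p:ℂ)+1+((q:ℂ)+1)) = ((p+q+2 : ℝ) : ℂ) := by push_cast; ring
  rw [h1, h2] at hval
  rw [show ((p+1:ℝ):ℂ)+((q+1:ℝ):ℂ) = ((p+q+2 : ℝ) : ℂ) by push_cast; ring] at hval
  rw [Complex.Gamma_ofReal, Complex.Gamma_ofReal, Complex.Gamma_ofReal] at hval
  have hval' : Real.Gamma (p+1) * Real.Gamma (q+1)
      = Real.Gamma (p+q+2) * ∫ x in Set.Ioo (0:ℝ) 1, x ^ p * (1-x) ^ q := by
    exact_mod_cast hval
  have hpos : 0 < Real.Gamma (p+q+2) := Real.Gamma_pos_of_pos (by linarith)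
  rw [eq_div_iff hpos.ne']
  linarith


set_option maxHeartbeats 1000000 in
lemma main_s (s : ℝ) (hs : (3:ℝ)/2 ≤ s) :
    IntegrableOn (fun x : ℝ =>
        (1 - x ^ s - (1 - x) ^ s) / Real.sqrt (2 * π * x ^ 3 * (1 - x) ^ 3)) (Set.Ioo 0 1) ∧
    (∫ x in Set.Ioo (0:ℝ) 1,
        (1 - x ^ s - (1 - x) ^ s) / Real.sqrt (2 * π * x ^ 3 * (1 - x) ^ 3))
      = 2 ^ ((3:ℝ)/2) * Real.Gamma (s - 1/2) / Real.Gamma (s - 1) := by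
  have hs1 : (1:ℝ) ≤ s := by linarith
  have hs0 : (0:ℝ) < s := by linarith
  set F : ℝ → ℝ := fun x => 1 - x ^ s - (1 - x) ^ s with hFdef
  set G : ℝ → ℝ := fun x => (4*x - 2) * (x ^ (-(1/2) : ℝ) * (1-x) ^ (-(1/2) : ℝ)) with hGdef
  set D : ℝ → ℝ := fun x => x ^ (-(3/2) : ℝ) * (1-x) ^ (-(3/2) : ℝ) with hDdef
  set R : ℝ → ℝ := fun x => (-(s * x ^ (s-1)) + s * (1-x) ^ (s-1)) * G x with hRdef
  -- bounds on F
  have hFb : ∀ x ∈ Set.Ioo (0:ℝ) 1, 0 ≤ F x ∧ F x ≤ 2*s*(x*(1-x)) := by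
    intro x hx
    obtain ⟨hx0, hx1⟩ := hx
    have h1x : (0:ℝ) < 1 - x := by linarith
    have hxs : x ^ s ≤ x := by
      have := Real.rpow_le_rpow_of_exponent_ge hx0 hx1.le hs1
      rwa [Real.rpow_one] at this
    have h1xs : (1-x) ^ s ≤ 1 - x := by
      have := Real.rpow_le_rpow_of_exponent_ge h1x (by linarith) hs1
      rwa [Real.rpow_one] at this
    have hBa : 1 - s*x ≤ (1-x) ^ s := by
      have := one_add_mul_self_le_rpow_one_add (s := -x) (by linarith) hs1
      rw [show (1:ℝ) + -x = 1 - x by ring] at this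
      nlinarith [this]
    have hBb : 1 - s*(1-x) ≤ x ^ s := by
      have := one_add_mul_self_le_rpow_one_add (s := -(1-x)) (by linarith) hs1
      rw [show (1:ℝ) + -(1-x) = x by ring] at this
      nlinarith [this]
    have hxs0 : (0:ℝ) ≤ x ^ s := Real.rpow_nonneg hx0.le s
    have h1xs0 : (0:ℝ) ≤ (1-x) ^ s := Real.rpow_nonneg h1x.le s
    constructor
    · simp only [hFdef]; nlinarith
    · simp only [hFdef]
      rcases le_or_gt x (1/2) with h | h
      · nlinarith
      · nlinarith
  -- rewrite of the statement integrand on Ioo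
  have h_eq : ∀ x ∈ Set.Ioo (0:ℝ) 1,
      (1 - x ^ s - (1 - x) ^ s) / Real.sqrt (2 * π * x ^ 3 * (1 - x) ^ 3)
        = F x * D x / Real.sqrt (2*π) := by
    intro x hx
    obtain ⟨hx0, hx1⟩ := hx
    have h1x : (0:ℝ) < 1 - x := by linarith
    have hsq : Real.sqrt (2 * π * x ^ 3 * (1 - x) ^ 3)
        = Real.sqrt (2*π) * (x ^ ((3:ℝ)/2) * (1-x) ^ ((3:ℝ)/2)) := by
      have e1 : Real.sqrt (x^3) = x ^ ((3:ℝ)/2) := by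
        rw [show (x:ℝ)^3 = x ^ ((3:ℕ):ℝ) by rw [Real.rpow_natCast],
          Real.sqrt_eq_rpow, ← Real.rpow_mul hx0.le]
        norm_num
      have e2 : Real.sqrt ((1-x)^3) = (1-x) ^ ((3:ℝ)/2) := by
        rw [show ((1-x):ℝ)^3 = (1-x) ^ ((3:ℕ):ℝ) by rw [Real.rpow_natCast],
          Real.sqrt_eq_rpow, ← Real.rpow_mul h1x.le]
        norm_num
      rw [show 2 * π * x ^ 3 * (1 - x) ^ 3 = (2*π) * (x^3 * (1-x)^3) by ring,
        Real.sqrt_mul (by positivity), Real.sqrt_mul (by positivity : (0:ℝ) ≤ x^3), e1, e2]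
    rw [hsq]
    have hD : D x = (x ^ ((3:ℝ)/2))⁻¹ * ((1-x) ^ ((3:ℝ)/2))⁻¹ := by
      simp only [hDdef]
      rw [show (-(3/2):ℝ) = -((3:ℝ)/2) by norm_num, Real.rpow_neg hx0.le,
        Real.rpow_neg h1x.le]
    rw [hD]
    have h1 : (0:ℝ) < x ^ ((3:ℝ)/2) := Real.rpow_pos_of_pos hx0 _
    have h2 : (0:ℝ) < (1-x) ^ ((3:ℝ)/2) := Real.rpow_pos_of_pos h1x _
    have h3 : (0:ℝ) < Real.sqrt (2*π) := Real.sqrt_pos.mpr (by positivity)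
    simp only [hFdef]
    rw [div_eq_mul_inv, div_eq_mul_inv, mul_inv, mul_inv]
    ring
  -- continuity helpers
  have hcont1 : ∀ p : ℝ, ContinuousOn (fun x : ℝ => x ^ p) (Set.Ioo 0 1) := by
    intro p x hx
    exact (Real.continuousAt_rpow_const x p (Or.inl (ne_of_gt hx.1))).continuousWithinAt
  have hcont2 : ∀ p : ℝ, ContinuousOn (fun x : ℝ => (1-x) ^ p) (Set.Ioo 0 1) := by
    intro p x hx
    have h1 : ContinuousAt (fun y : ℝ => 1 - y) x := by fun_prop
    have h2 : ContinuousAt (fun y : ℝ => y ^ p) (1-x) :=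
      Real.continuousAt_rpow_const _ p (Or.inl (ne_of_gt (by linarith [hx.2] : (0:ℝ) < 1 - x)))
    exact (h2.comp h1).continuousWithinAt
  have hFDcont : ContinuousOn (fun x => F x * D x) (Set.Ioo 0 1) := by
    apply ContinuousOn.mul
    · simp only [hFdef]
      exact (continuousOn_const.sub (hcont1 s)).sub (hcont2 s)
    · simp only [hDdef]
      exact (hcont1 _).mul (hcont2 _)
  -- bound |F x * D x| and integrability
  have hFD_bd : ∀ x ∈ Set.Ioo (0:ℝ) 1,
      ‖F x * D x‖ ≤ ‖2*s * (x ^ (-(1/2):ℝ) * (1-x) ^ (-(1/2):ℝ))‖ := by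
    intro x hx
    obtain ⟨hx0, hx1⟩ := hx
    have h1x : (0:ℝ) < 1 - x := by linarith
    obtain ⟨hF0, hF2⟩ := hFb x ⟨hx0, hx1⟩
    have hDpos : 0 < D x := by
      simp only [hDdef]
      exact mul_pos (Real.rpow_pos_of_pos hx0 _) (Real.rpow_pos_of_pos h1x _)
    have hkey : x * (1-x) * D x = x ^ (-(1/2):ℝ) * (1-x) ^ (-(1/2):ℝ) := by
      simp only [hDdef]
      have e1 : x * x ^ (-(3/2):ℝ) = x ^ (-(1/2):ℝ) := by
        rw [show (-(1/2):ℝ) = 1 + (-(3/2)) by norm_num, Real.rpow_add hx0, Real.rpow_one]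
      have e2 : (1-x) * (1-x) ^ (-(3/2):ℝ) = (1-x) ^ (-(1/2):ℝ) := by
        rw [show (-(1/2):ℝ) = 1 + (-(3/2)) by norm_num, Real.rpow_add h1x, Real.rpow_one]
      rw [← e1, ← e2]; ring
    have hb2 : F x * D x ≤ 2*s * (x ^ (-(1/2):ℝ) * (1-x) ^ (-(1/2):ℝ)) := by
      rw [← hkey]
      calc F x * D x ≤ 2*s*(x*(1-x)) * D x := by
            exact mul_le_mul_of_nonneg_right hF2 hDpos.le
        _ = 2*s * (x * (1-x) * D x) := by ring
    rw [Real.norm_eq_abs, Real.norm_eq_abs, abs_of_nonneg (mul_nonneg hF0 hDpos.le)]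
    exact hb2.trans (le_abs_self _)
  have hbound_int : IntegrableOn
      (fun x : ℝ => 2*s * (x ^ (-(1/2):ℝ) * (1-x) ^ (-(1/2):ℝ))) (Set.Ioo 0 1) :=
    ((my_beta (-(1/2)) (-(1/2)) (by norm_num) (by norm_num)).1).const_mul (2*s)
  have hFD_int : IntegrableOn (fun x => F x * D x) (Set.Ioo 0 1) := by
    apply Integrable.mono hbound_int
      (hFDcont.aestronglyMeasurable measurableSet_Ioo)
    exact (ae_restrict_iff' measurableSet_Ioo).mpr (Filter.Eventually.of_forall hFD_bd)
  have hmain_int : IntegrableOn (fun x : ℝ =>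
      (1 - x ^ s - (1 - x) ^ s) / Real.sqrt (2 * π * x ^ 3 * (1 - x) ^ 3)) (Set.Ioo 0 1) := by
    have h' : IntegrableOn (fun x => F x * D x / Real.sqrt (2*π)) (Set.Ioo 0 1) :=
      hFD_int.div_const _
    exact h'.congr_fun (fun x hx => (h_eq x hx).symm) measurableSet_Ioo
  refine ⟨hmain_int, ?_⟩
  have hderiv : ∀ x ∈ Set.Ioo (0:ℝ) 1,
      HasDerivAt (fun y => F y * G y) (F x * D x + R x) x := by
    intro x hx
    obtain ⟨hx0, hx1⟩ := hx
    have h1x : (0:ℝ) < 1 - x := by linarith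
    have hid : HasDerivAt (fun y : ℝ => 1 - y) (-1) x := by
      simpa using (hasDerivAt_id x).const_sub 1
    have hFa : HasDerivAt (fun y : ℝ => y ^ s) (s * x ^ (s-1)) x :=
      Real.hasDerivAt_rpow_const (Or.inl hx0.ne')
    have hFb' : HasDerivAt (fun y : ℝ => (1-y) ^ s) (s * (1-x) ^ (s-1) * (-1)) x :=
      (Real.hasDerivAt_rpow_const (x := 1-x) (p := s) (Or.inl (ne_of_gt h1x))).comp x hid
    have hF' : HasDerivAt F (-(s * x ^ (s-1)) + s * (1-x) ^ (s-1)) x := by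
      have h := ((hasDerivAt_const x (1:ℝ)).sub hFa).sub hFb'
      exact h.congr_deriv (by ring)
    have hHa : HasDerivAt (fun y : ℝ => y ^ (-(1/2):ℝ)) ((-(1/2):ℝ) * x ^ ((-(1/2):ℝ)-1)) x :=
      Real.hasDerivAt_rpow_const (Or.inl hx0.ne')
    have hHb : HasDerivAt (fun y : ℝ => (1-y) ^ (-(1/2):ℝ))
        ((-(1/2):ℝ) * (1-x) ^ ((-(1/2):ℝ)-1) * (-1)) x :=
      (Real.hasDerivAt_rpow_const (x := 1-x) (p := (-(1/2):ℝ))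
        (Or.inl (ne_of_gt h1x))).comp x hid
    have hlin : HasDerivAt (fun y : ℝ => 4*y - 2) 4 x := by
      simpa using ((hasDerivAt_id x).const_mul 4).sub_const 2
    have hG' : HasDerivAt G
        (4 * (x ^ (-(1/2):ℝ) * (1-x) ^ (-(1/2):ℝ)) + (4*x-2) *
          (((-(1/2):ℝ) * x ^ ((-(1/2):ℝ)-1)) * (1-x) ^ (-(1/2):ℝ) +
            x ^ (-(1/2):ℝ) * ((-(1/2):ℝ) * (1-x) ^ ((-(1/2):ℝ)-1) * (-1)))) x :=
      hlin.mul (hHa.mul hHb)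
    have hu0 : (0:ℝ) < x ^ ((1/2):ℝ) := Real.rpow_pos_of_pos hx0 _
    have hv0 : (0:ℝ) < (1-x) ^ ((1/2):ℝ) := Real.rpow_pos_of_pos h1x _
    have eu1 : x ^ (-(1/2):ℝ) = (x ^ ((1/2):ℝ))⁻¹ := Real.rpow_neg hx0.le _
    have ev1 : (1-x) ^ (-(1/2):ℝ) = ((1-x) ^ ((1/2):ℝ))⁻¹ := Real.rpow_neg h1x.le _
    have eu3 : x ^ ((-(1/2):ℝ)-1) = (x ^ ((1/2):ℝ))⁻¹ * x⁻¹ := by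
      rw [show ((-(1/2):ℝ))-1 = (-(1/2)) + (-1) by ring, Real.rpow_add hx0,
        Real.rpow_neg hx0.le, Real.rpow_neg_one]
    have ev3 : (1-x) ^ ((-(1/2):ℝ)-1) = ((1-x) ^ ((1/2):ℝ))⁻¹ * (1-x)⁻¹ := by
      rw [show ((-(1/2):ℝ))-1 = (-(1/2)) + (-1) by ring, Real.rpow_add h1x,
        Real.rpow_neg h1x.le, Real.rpow_neg_one]
    have eu5 : x ^ (-(3/2):ℝ) = (x ^ ((1/2):ℝ))⁻¹ * x⁻¹ := by
      rw [show (-(3/2):ℝ) = (-(1/2)) + (-1) by ring, Real.rpow_add hx0,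
        Real.rpow_neg hx0.le, Real.rpow_neg_one]
    have ev5 : (1-x) ^ (-(3/2):ℝ) = ((1-x) ^ ((1/2):ℝ))⁻¹ * (1-x)⁻¹ := by
      rw [show (-(3/2):ℝ) = (-(1/2)) + (-1) by ring, Real.rpow_add h1x,
        Real.rpow_neg h1x.le, Real.rpow_neg_one]
    have hGD : (4 * (x ^ (-(1/2):ℝ) * (1-x) ^ (-(1/2):ℝ)) + (4*x-2) *
          (((-(1/2):ℝ) * x ^ ((-(1/2):ℝ)-1)) * (1-x) ^ (-(1/2):ℝ) +
            x ^ (-(1/2):ℝ) * ((-(1/2):ℝ) * (1-x) ^ ((-(1/2):ℝ)-1) * (-1)))) = D x := by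
      simp only [hDdef]
      rw [eu1, ev1, eu3, ev3, eu5, ev5]
      have h1 : (1:ℝ) - x ≠ 0 := ne_of_gt h1x
      field_simp
      ring
    have h := hF'.mul hG'
    rw [hGD] at h
    exact h.congr_deriv (by simp only [hRdef]; ring)
  -- boundary bound
  have hbd : ∀ x ∈ Set.Ioo (0:ℝ) 1,
      ‖F x * G x‖ ≤ 4*s*(Real.sqrt x * Real.sqrt (1-x)) := by
    intro x hx
    obtain ⟨hx0, hx1⟩ := hx
    have h1x : (0:ℝ) < 1 - x := by linarith
    obtain ⟨hF0, hF2⟩ := hFb x ⟨hx0, hx1⟩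
    have hu0 : (0:ℝ) < x ^ ((1/2):ℝ) := Real.rpow_pos_of_pos hx0 _
    have hv0 : (0:ℝ) < (1-x) ^ ((1/2):ℝ) := Real.rpow_pos_of_pos h1x _
    have eu1 : x ^ (-(1/2):ℝ) = (x ^ ((1/2):ℝ))⁻¹ := Real.rpow_neg hx0.le _
    have ev1 : (1-x) ^ (-(1/2):ℝ) = ((1-x) ^ ((1/2):ℝ))⁻¹ := Real.rpow_neg h1x.le _
    have hu2 : x ^ ((1/2):ℝ) * x ^ ((1/2):ℝ) = x := by
      rw [← Real.rpow_add hx0]; norm_num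
    have hv2 : (1-x) ^ ((1/2):ℝ) * (1-x) ^ ((1/2):ℝ) = 1-x := by
      rw [← Real.rpow_add h1x]; norm_num
    have hsx : Real.sqrt x = x ^ ((1/2):ℝ) := by
      rw [Real.sqrt_eq_rpow]
    have hs1x : Real.sqrt (1-x) = (1-x) ^ ((1/2):ℝ) := by
      rw [Real.sqrt_eq_rpow]
    have hGx : G x = (4*x-2) * ((x ^ ((1/2):ℝ))⁻¹ * ((1-x) ^ ((1/2):ℝ))⁻¹) := by
      simp only [hGdef]
      rw [eu1, ev1]
    rw [Real.norm_eq_abs, hGx, hsx, hs1x]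
    have h42 : |4*x-2| ≤ 2 := by rw [abs_le]; constructor <;> linarith
    rw [abs_mul, abs_mul, abs_of_nonneg hF0,
      abs_of_nonneg (by positivity : (0:ℝ) ≤ (x ^ ((1/2):ℝ))⁻¹ * ((1-x) ^ ((1/2):ℝ))⁻¹)]
    calc F x * (|4*x-2| * ((x ^ ((1/2):ℝ))⁻¹ * ((1-x) ^ ((1/2):ℝ))⁻¹))
        ≤ (2*s*(x*(1-x))) * (2 * ((x ^ ((1/2):ℝ))⁻¹ * ((1-x) ^ ((1/2):ℝ))⁻¹)) := by
          apply mul_le_mul hF2 ?_ (by positivity) (by positivity)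
          exact mul_le_mul_of_nonneg_right h42 (by positivity)
      _ = 4*s*(x ^ ((1/2):ℝ) * (1-x) ^ ((1/2):ℝ)) := by
          generalize hU : x ^ ((1/2):ℝ) = U at hu2 hu0 ⊢
          generalize hV : (1-x) ^ ((1/2):ℝ) = V at hv2 hv0 ⊢
          rw [← hv2, ← hu2]
          field_simp
          ring
  have hlim0 : Filter.Tendsto (fun x => F x * G x) (nhdsWithin (0:ℝ) (Set.Ioi 0)) (nhds 0) := by
    apply squeeze_zero_norm'
    · filter_upwards [Ioo_mem_nhdsGT_of_mem
        (by constructor <;> norm_num : (0:ℝ) ∈ Set.Ico (0:ℝ) 1)] with x hx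
      exact hbd x hx
    · have hc : Continuous fun x : ℝ => 4*s*(Real.sqrt x * Real.sqrt (1-x)) := by fun_prop
      have h0 := hc.tendsto 0
      norm_num [Real.sqrt_zero] at h0
      exact h0.mono_left nhdsWithin_le_nhds
  have hlim1 : Filter.Tendsto (fun x => F x * G x) (nhdsWithin (1:ℝ) (Set.Iio 1)) (nhds 0) := by
    apply squeeze_zero_norm'
    · filter_upwards [Ioo_mem_nhdsLT_of_mem
        (by constructor <;> norm_num : (1:ℝ) ∈ Set.Ioc (0:ℝ) 1)] with x hx
      exact hbd x hx
    · have hc : Continuous fun x : ℝ => 4*s*(Real.sqrt x * Real.sqrt (1-x)) := by fun_prop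
      have h0 := hc.tendsto 1
      norm_num [Real.sqrt_zero] at h0
      exact h0.mono_left nhdsWithin_le_nhds
  -- beta pieces
  have hb1 := my_beta (s - 1/2) (-(1/2)) (by linarith) (by norm_num)
  have hb2 := my_beta (s - 3/2) (-(1/2)) (by linarith) (by norm_num)
  have hb3 := my_beta ((1/2):ℝ) (s - 3/2) (by norm_num) (by linarith)
  have hb4 := my_beta (-(1/2):ℝ) (s - 3/2) (by norm_num) (by linarith)
  have hR_eq : ∀ x ∈ Set.Ioo (0:ℝ) 1, R x =
      (-(4*s)) * (x ^ (s-1/2) * (1-x) ^ (-(1/2):ℝ))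
      + (2*s) * (x ^ (s-3/2) * (1-x) ^ (-(1/2):ℝ))
      + ((4*s) * (x ^ ((1/2):ℝ) * (1-x) ^ (s-3/2))
      + (-(2*s)) * (x ^ (-(1/2):ℝ) * (1-x) ^ (s-3/2))) := by
    intro x hx
    obtain ⟨hx0, hx1⟩ := hx
    have h1x : (0:ℝ) < 1 - x := by linarith
    have hu0 : (0:ℝ) < x ^ ((1/2):ℝ) := Real.rpow_pos_of_pos hx0 _
    have hv0 : (0:ℝ) < (1-x) ^ ((1/2):ℝ) := Real.rpow_pos_of_pos h1x _
    have hu2 : x ^ ((1/2):ℝ) * x ^ ((1/2):ℝ) = x := by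
      rw [← Real.rpow_add hx0]; norm_num
    have eu1 : x ^ (-(1/2):ℝ) = (x ^ ((1/2):ℝ))⁻¹ := Real.rpow_neg hx0.le _
    have ev1 : (1-x) ^ (-(1/2):ℝ) = ((1-x) ^ ((1/2):ℝ))⁻¹ := Real.rpow_neg h1x.le _
    have ea1 : x ^ (s-1/2) = x ^ (s-1) * x ^ ((1/2):ℝ) := by
      rw [← Real.rpow_add hx0]; congr 1; ring
    have ea2 : x ^ (s-3/2) = x ^ (s-1) * (x ^ ((1/2):ℝ))⁻¹ := by
      rw [← Real.rpow_neg hx0.le, ← Real.rpow_add hx0]; congr 1; ring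
    have eb2 : (1-x) ^ (s-3/2) = (1-x) ^ (s-1) * ((1-x) ^ ((1/2):ℝ))⁻¹ := by
      rw [← Real.rpow_neg h1x.le, ← Real.rpow_add h1x]; congr 1; ring
    have h42 : 4*x - 2 = 4*(x ^ ((1/2):ℝ) * x ^ ((1/2):ℝ)) - 2 := by rw [hu2]
    simp only [hRdef, hGdef]
    rw [eu1, ev1, ea1, ea2, eb2, h42]
    generalize x ^ (s-1) = a
    generalize (1-x) ^ (s-1) = b
    generalize hU : x ^ ((1/2):ℝ) = U at hu0 ⊢
    generalize hV : (1-x) ^ ((1/2):ℝ) = V at hv0 ⊢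
    have hU0 : U ≠ 0 := ne_of_gt hu0
    have hV0 : V ≠ 0 := ne_of_gt hv0
    field_simp
    ring
  have hcombo_int : IntegrableOn (fun x : ℝ =>
      (-(4*s)) * (x ^ (s-1/2) * (1-x) ^ (-(1/2):ℝ))
      + (2*s) * (x ^ (s-3/2) * (1-x) ^ (-(1/2):ℝ))
      + ((4*s) * (x ^ ((1/2):ℝ) * (1-x) ^ (s-3/2))
      + (-(2*s)) * (x ^ (-(1/2):ℝ) * (1-x) ^ (s-3/2)))) (Set.Ioo 0 1) :=
    ((hb1.1.const_mul _).add (hb2.1.const_mul _)).add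
      ((hb3.1.const_mul _).add (hb4.1.const_mul _))
  have hRIoo : IntegrableOn R (Set.Ioo 0 1) :=
    hcombo_int.congr_fun (fun x hx => (hR_eq x hx).symm) measurableSet_Ioo
  -- FTC
  have hFTC : ∫ x in (0:ℝ)..1, (F x * D x + R x) = 0 - 0 := by
    apply intervalIntegral.integral_eq_sub_of_hasDerivAt_of_tendsto zero_lt_one hderiv ?_
      hlim0 hlim1
    rw [intervalIntegrable_iff_integrableOn_Ioo_of_le zero_le_one]
    exact hFD_int.add hRIoo
  rw [intervalIntegral.integral_of_le zero_le_one,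
    MeasureTheory.integral_Ioc_eq_integral_Ioo,
    MeasureTheory.integral_add hFD_int hRIoo] at hFTC
  have hFDval : ∫ x in Set.Ioo (0:ℝ) 1, F x * D x = -(∫ x in Set.Ioo (0:ℝ) 1, R x) := by
    linarith
  -- value of ∫ R
  have hRval : ∫ x in Set.Ioo (0:ℝ) 1, R x =
      (-(4*s)) * (Real.Gamma (s-1/2+1) * Real.Gamma (-(1/2)+1) / Real.Gamma (s-1/2+(-(1/2))+2))
      + (2*s) * (Real.Gamma (s-3/2+1) * Real.Gamma (-(1/2)+1) / Real.Gamma (s-3/2+(-(1/2))+2))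
      + ((4*s) * (Real.Gamma ((1/2:ℝ)+1) * Real.Gamma (s-3/2+1) / Real.Gamma ((1/2:ℝ)+(s-3/2)+2))
      + (-(2*s)) * (Real.Gamma (-(1/2:ℝ)+1) * Real.Gamma (s-3/2+1) / Real.Gamma (-(1/2:ℝ)+(s-3/2)+2))) := by
    rw [setIntegral_congr_fun measurableSet_Ioo (fun x hx => hR_eq x hx)]
    have i1 : IntegrableOn (fun x : ℝ => (-(4*s)) * (x ^ (s-1/2) * (1-x) ^ (-(1/2):ℝ)))
        (Set.Ioo 0 1) := hb1.1.const_mul _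
    have i2 : IntegrableOn (fun x : ℝ => (2*s) * (x ^ (s-3/2) * (1-x) ^ (-(1/2):ℝ)))
        (Set.Ioo 0 1) := hb2.1.const_mul _
    have i3 : IntegrableOn (fun x : ℝ => (4*s) * (x ^ ((1/2):ℝ) * (1-x) ^ (s-3/2)))
        (Set.Ioo 0 1) := hb3.1.const_mul _
    have i4 : IntegrableOn (fun x : ℝ => (-(2*s)) * (x ^ (-(1/2):ℝ) * (1-x) ^ (s-3/2)))
        (Set.Ioo 0 1) := hb4.1.const_mul _
    have i12 : IntegrableOn (fun x : ℝ => (-(4*s)) * (x ^ (s-1/2) * (1-x) ^ (-(1/2):ℝ))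
        + (2*s) * (x ^ (s-3/2) * (1-x) ^ (-(1/2):ℝ))) (Set.Ioo 0 1) := i1.add i2
    have i34 : IntegrableOn (fun x : ℝ => (4*s) * (x ^ ((1/2):ℝ) * (1-x) ^ (s-3/2))
        + (-(2*s)) * (x ^ (-(1/2):ℝ) * (1-x) ^ (s-3/2))) (Set.Ioo 0 1) := i3.add i4
    rw [MeasureTheory.integral_add i12 i34, MeasureTheory.integral_add i1 i2,
      MeasureTheory.integral_add i3 i4,
      MeasureTheory.integral_const_mul, MeasureTheory.integral_const_mul,
      MeasureTheory.integral_const_mul, MeasureTheory.integral_const_mul,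
      hb1.2, hb2.2, hb3.2, hb4.2]
  have hsplit : ∫ x in Set.Ioo (0:ℝ) 1,
      (1 - x ^ s - (1 - x) ^ s) / Real.sqrt (2 * π * x ^ 3 * (1 - x) ^ 3)
      = (∫ x in Set.Ioo (0:ℝ) 1, F x * D x) / Real.sqrt (2*π) := by
    rw [setIntegral_congr_fun measurableSet_Ioo (fun x hx => h_eq x hx),
      MeasureTheory.integral_div]
  rw [hsplit, hFDval, hRval]
  have hg1 : Real.Gamma (-(1/2:ℝ)+1) = Real.sqrt π := by
    rw [show (-(1/2:ℝ)+1) = 1/2 by norm_num, Real.Gamma_one_half_eq]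
  have hg2 : Real.Gamma ((1/2:ℝ)+1) = Real.sqrt π / 2 := by
    rw [Real.Gamma_add_one (by norm_num), Real.Gamma_one_half_eq]; ring
  have hA : 0 < Real.Gamma (s - 1/2) := Real.Gamma_pos_of_pos (by linarith)
  have hC : 0 < Real.Gamma (s - 1) := Real.Gamma_pos_of_pos (by linarith)
  have hgs : Real.Gamma s = (s-1) * Real.Gamma (s-1) := by
    have h := Real.Gamma_add_one (s := s-1) (by intro h; rw [sub_eq_zero] at h; linarith)
    rw [sub_add_cancel] at h; exact h
  have hgs1 : Real.Gamma (s+1) = s * Real.Gamma s :=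
    Real.Gamma_add_one (ne_of_gt hs0)
  have hgsh : Real.Gamma (s+1/2) = (s-1/2) * Real.Gamma (s-1/2) := by
    have h := Real.Gamma_add_one (s := s-1/2) (by intro h; rw [sub_eq_zero] at h; linarith)
    rw [show s-1/2+1 = s+1/2 by ring] at h; exact h
  rw [show s-1/2+1 = s+1/2 by ring, show s-3/2+1 = s-1/2 by ring,
    show s-1/2+(-(1/2))+2 = s+1 by ring, show s-3/2+(-(1/2))+2 = s by ring,
    show (1/2:ℝ)+(s-3/2)+2 = s+1 by ring, show (-(1/2:ℝ))+(s-3/2)+2 = s by ring,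
    hg1, hg2, hgsh, hgs1, hgs]
  have hsp : 0 < Real.sqrt π := Real.sqrt_pos.mpr Real.pi_pos
  have hW : 0 < Real.sqrt (2*π) := Real.sqrt_pos.mpr (by positivity)
  have hs2 : (0:ℝ) < Real.sqrt 2 := Real.sqrt_pos.mpr (by norm_num)
  have hs2' : Real.sqrt 2 * Real.sqrt 2 = 2 := Real.mul_self_sqrt (by norm_num)
  have h2pi : Real.sqrt (2*π) = Real.sqrt 2 * Real.sqrt π := Real.sqrt_mul (by norm_num) π
  have h232 : (2:ℝ) ^ ((3:ℝ)/2) = 2 * Real.sqrt 2 := by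
    rw [show (3:ℝ)/2 = 1 + 1/2 by norm_num, Real.rpow_add (by norm_num), Real.rpow_one,
      ← Real.sqrt_eq_rpow]
  have hkey : Real.sqrt (2*π) * ((2:ℝ) ^ ((3:ℝ)/2)) = 4 * Real.sqrt π := by
    rw [h2pi, h232]
    linear_combination (2*Real.sqrt π) * hs2'
  have hX : (2:ℝ) ^ ((3:ℝ)/2) = 4 * Real.sqrt π / Real.sqrt (2*π) := by
    rw [eq_div_iff hW.ne']
    linarith [hkey]
  rw [hX]
  have hne1 : s ≠ 0 := ne_of_gt hs0
  have hne2 : s - 1 ≠ 0 := by intro h; rw [sub_eq_zero] at h; linarith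
  field_simp
  ring


/-- For every integer `k ≥ 1`, the function
`x ↦ (1 - x^{3k/2} - (1-x)^{3k/2}) / √(2π x³ (1-x)³)` is integrable on `(0,1)` and its
integral equals `2^{3/2} Γ((3k-1)/2) / Γ(3k/2 - 1)`. -/
theorem stmt_4 (k : ℕ) (hk : 1 ≤ k) :
    IntegrableOn (fun x : ℝ =>
        (1 - x ^ (3 * (k : ℝ) / 2) - (1 - x) ^ (3 * (k : ℝ) / 2)) /
          Real.sqrt (2 * π * x ^ 3 * (1 - x) ^ 3)) (Set.Ioo 0 1) ∧
    (∫ x in Set.Ioo (0 : ℝ) 1,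
        (1 - x ^ (3 * (k : ℝ) / 2) - (1 - x) ^ (3 * (k : ℝ) / 2)) /
          Real.sqrt (2 * π * x ^ 3 * (1 - x) ^ 3))
      = 2 ^ ((3 : ℝ) / 2) * Real.Gamma ((3 * (k : ℝ) - 1) / 2) /
          Real.Gamma (3 * (k : ℝ) / 2 - 1) := by
  have hk' : (1:ℝ) ≤ (k:ℝ) := by exact_mod_cast hk
  have h := main_s (3*(k:ℝ)/2) (by linarith)
  refine ⟨h.1, ?_⟩
  rw [show (3*(k:ℝ)-1)/2 = 3*(k:ℝ)/2 - 1/2 by ring]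
  exact h.2
end

section
/- For integers k ≥ 1 and 1 ≤ j ≤ k−1, set a_k = 2^{3/2} Γ((3k−1)/2) / Γ(3k/2 − 1) and a_{j,k} = k! Γ((3j−1)/2) Γ((3(k−j)−1)/2) / (√(2π) j! (k−j)! Γ(3k/2 − 1)). Let (M_k)_{k≥0} and (K_k)_{k≥0} be real sequences related by M_k = 4√π 2^{-k/2} k! K_k / Γ((3k−1)/2) for all k ≥ 0, with M_0 = 1 (equivalently K_0 = −1/2). Then (M_k) satisfies the recursion a_k M_k = k M_{k−1} + ∑_{j=1}^{k−1} a_{j,k} M_j M_{k−j} for all k ≥ 1 if and only if (K_k) satisfies Takács' recursion K_k = (3k/4 − 1) K_{k−1} + ∑_{j=1}^{k−1} K_j K_{k−j} for all k ≥ 1. -/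
open Real

/-- With `a_k = 2^{3/2} Γ((3k-1)/2)/Γ(3k/2-1)` and
`a_{j,k} = k! Γ((3j-1)/2) Γ((3(k-j)-1)/2)/(√(2π) j! (k-j)! Γ(3k/2-1))`, and sequences
related by `M_k = 4√π 2^{-k/2} k! K_k / Γ((3k-1)/2)` with `M_0 = 1`, the recursion
`a_k M_k = k M_{k-1} + ∑_{j=1}^{k-1} a_{j,k} M_j M_{k-j}` holds for all `k ≥ 1` if and
only if Takács' recursion `K_k = (3k/4 - 1) K_{k-1} + ∑_{j=1}^{k-1} K_j K_{k-j}` does. -/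
theorem stmt_6 (M K : ℕ → ℝ)
    (hMK : ∀ k : ℕ, M k = 4 * Real.sqrt π * 2 ^ (-(k : ℝ) / 2) * (Nat.factorial k) * K k /
      Real.Gamma ((3 * (k : ℝ) - 1) / 2))
    (hM0 : M 0 = 1) :
    (∀ k : ℕ, 1 ≤ k →
        (2 ^ ((3 : ℝ) / 2) * Real.Gamma ((3 * (k : ℝ) - 1) / 2) /
            Real.Gamma (3 * (k : ℝ) / 2 - 1)) * M k
          = (k : ℝ) * M (k - 1) +
            ∑ j ∈ Finset.Icc 1 (k - 1),
              ((Nat.factorial k : ℝ) * Real.Gamma ((3 * (j : ℝ) - 1) / 2) *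
                  Real.Gamma ((3 * ((k : ℝ) - (j : ℝ)) - 1) / 2) /
                (Real.sqrt (2 * π) * (Nat.factorial j : ℝ) * (Nat.factorial (k - j) : ℝ) *
                  Real.Gamma (3 * (k : ℝ) / 2 - 1))) * M j * M (k - j))
    ↔ (∀ k : ℕ, 1 ≤ k →
        K k = (3 * (k : ℝ) / 4 - 1) * K (k - 1) +
          ∑ j ∈ Finset.Icc 1 (k - 1), K j * K (k - j)) := by
  have ht2 : (2:ℝ) ^ ((1:ℝ)/2) * (2:ℝ) ^ ((1:ℝ)/2) = 2 := by
    rw [← Real.rpow_add two_pos]; norm_num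
  have ht3 : (2:ℝ) ^ ((3:ℝ)/2) = 2 * (2:ℝ) ^ ((1:ℝ)/2) := by
    rw [show (3:ℝ)/2 = 1 + 1/2 by norm_num, Real.rpow_add two_pos, Real.rpow_one]
  have hsπ : Real.sqrt π ≠ 0 := by positivity
  have htne : (2:ℝ) ^ ((1:ℝ)/2) ≠ 0 := by positivity
  have hune : ∀ x : ℝ, (2:ℝ) ^ x ≠ 0 := fun x => (Real.rpow_pos_of_pos two_pos x).ne'
  have hs2π : Real.sqrt (2*π) = (2:ℝ) ^ ((1:ℝ)/2) * Real.sqrt π := by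
    rw [Real.sqrt_mul (by norm_num : (0:ℝ) ≤ 2), Real.sqrt_eq_rpow]
  have hG : ∀ j : ℕ, Real.Gamma ((3 * (j:ℝ) - 1)/2) ≠ 0 := by
    intro j
    rcases Nat.eq_zero_or_pos j with h | h
    · subst h
      refine Real.Gamma_ne_zero fun m => ?_
      push_cast
      intro hm
      have h2 : (2*m : ℕ) = 1 := by exact_mod_cast (by push_cast; linarith : ((2*m:ℕ):ℝ) = 1)
      omega
    · refine (Real.Gamma_pos_of_pos ?_).ne'
      have : (1:ℝ) ≤ j := by exact_mod_cast h
      linarith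
  have hG2 : ∀ k : ℕ, 1 ≤ k → Real.Gamma (3*(k:ℝ)/2 - 1) ≠ 0 := by
    intro k hk
    refine (Real.Gamma_pos_of_pos ?_).ne'
    have : (1:ℝ) ≤ k := by exact_mod_cast hk
    linarith
  refine forall₂_congr fun k hk => ?_
  set C : ℝ := 2 ^ ((3:ℝ)/2) * (4 * Real.sqrt π) * 2 ^ (-(k:ℝ)/2) * (Nat.factorial k) /
      Real.Gamma (3*(k:ℝ)/2 - 1) with hCdef
  have hC : C ≠ 0 := by
    apply div_ne_zero _ (hG2 k hk)
    have := Nat.factorial_pos k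
    positivity
  have hfac : (k:ℝ) * (Nat.factorial (k-1) : ℝ) = (Nat.factorial k : ℝ) := by
    exact_mod_cast congrArg (Nat.cast : ℕ → ℝ) (Nat.mul_factorial_pred (by omega : k ≠ 0))
  have hxne : (3*(k:ℝ)-4)/2 ≠ 0 := by
    intro h
    have h3 : (3*(k:ℝ)) = 4 := by linarith
    have : (3*k : ℕ) = 4 := by exact_mod_cast (by push_cast; linarith : ((3*k:ℕ):ℝ) = 4)
    omega
  have hrec : Real.Gamma (3*(k:ℝ)/2 - 1) =
      ((3*(k:ℝ)-4)/2) * Real.Gamma ((3*((k:ℝ)-1)-1)/2) := by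
    rw [show 3*(k:ℝ)/2 - 1 = (3*(k:ℝ)-4)/2 + 1 by ring, Real.Gamma_add_one hxne]
    congr 2
    ring
  have hck : ((k-1:ℕ):ℝ) = (k:ℝ) - 1 := by
    rw [Nat.cast_sub hk, Nat.cast_one]
  have h1 : (2 ^ ((3 : ℝ) / 2) * Real.Gamma ((3 * (k : ℝ) - 1) / 2) /
      Real.Gamma (3 * (k : ℝ) / 2 - 1)) * M k = C * K k := by
    have hGk := hG k
    rw [hMK k, hCdef]
    set Ga := Real.Gamma ((3 * (k:ℝ) - 1) / 2) with hGa
    set Gb := Real.Gamma (3 * (k:ℝ) / 2 - 1) with hGb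
    field_simp [hGk, hG2 k hk]
  have h2 : (k:ℝ) * M (k-1) = C * ((3 * (k : ℝ) / 4 - 1) * K (k - 1)) := by
    rw [hMK (k-1), hck, hCdef, hrec,
      show -((k:ℝ)-1)/2 = -(k:ℝ)/2 + 1/2 by ring, Real.rpow_add two_pos, ← hfac, ht3]
    have hGk1 := hG (k-1)
    rw [hck] at hGk1
    have hkne : (k:ℝ) ≠ 0 := by positivity
    set Gc := Real.Gamma ((3 * ((k:ℝ) - 1) - 1) / 2) with hGc
    set u := (2:ℝ) ^ (-(k:ℝ)/2) with hu
    set t := (2:ℝ) ^ ((1:ℝ)/2) with htd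
    have h34 : (3*(k:ℝ) - 4) ≠ 0 := by
      intro h
      apply hxne
      rw [h]
      norm_num
    have hne : ((k:ℝ) * Gc * 12 - Gc * 16) ≠ 0 := by
      have he : ((k:ℝ) * Gc * 12 - Gc * 16) = 4 * Gc * (3*(k:ℝ)-4) := by ring
      rw [he]
      exact mul_ne_zero (mul_ne_zero (by norm_num) hGk1) h34
    have h34' : (-4 + (k:ℝ)*3) ≠ 0 := by intro h; apply h34; linarith
    field_simp [hGk1, hxne, htne, hne, h34']
    have e : (-4 + (k:ℝ)*3)⁻¹ * (-4 + (k:ℝ)*3) = 1 := inv_mul_cancel₀ h34'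
    linear_combination (-4 * u * K (k - 1)) * e
  have h3 : ∀ j ∈ Finset.Icc 1 (k-1),
      ((Nat.factorial k : ℝ) * Real.Gamma ((3 * (j : ℝ) - 1) / 2) *
          Real.Gamma ((3 * ((k : ℝ) - (j : ℝ)) - 1) / 2) /
        (Real.sqrt (2 * π) * (Nat.factorial j : ℝ) * (Nat.factorial (k - j) : ℝ) *
          Real.Gamma (3 * (k : ℝ) / 2 - 1))) * M j * M (k - j)
      = C * (K j * K (k - j)) := by
    intro j hj
    simp only [Finset.mem_Icc] at hj
    obtain ⟨hj1, hj2⟩ := hj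
    have hjk : j ≤ k := by omega
    have hcast : ((k - j:ℕ):ℝ) = (k:ℝ) - (j:ℝ) := by
      rw [Nat.cast_sub hjk]
    have hGkj := hG (k-j)
    rw [hcast] at hGkj
    have hMkj := hMK (k-j)
    rw [hcast] at hMkj
    have hmul : (2:ℝ)^(-(j:ℝ)/2) * (2:ℝ)^(-((k:ℝ)-(j:ℝ))/2) = 2 ^ (-(k:ℝ)/2) := by
      rw [← Real.rpow_add two_pos]
      congr 1
      ring
    rw [hMK j, hMkj, hCdef, hs2π, ht3, ← hmul]
    have hGj := hG j
    have hGb := hG2 k hk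
    have hfj : (Nat.factorial j : ℝ) ≠ 0 := by positivity
    have hfkj : (Nat.factorial (k-j) : ℝ) ≠ 0 := by positivity
    set Gj := Real.Gamma ((3 * (j:ℝ) - 1) / 2) with hGjd
    set Gkj := Real.Gamma ((3 * ((k:ℝ) - (j:ℝ)) - 1) / 2) with hGkjd
    set Gb := Real.Gamma (3 * (k:ℝ) / 2 - 1) with hGbd
    set uj := (2:ℝ) ^ (-(j:ℝ)/2) with hujd
    set ukj := (2:ℝ) ^ (-((k:ℝ)-(j:ℝ))/2) with hukjd
    set t := (2:ℝ) ^ ((1:ℝ)/2) with htd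
    have hujne : uj ≠ 0 := hune _
    have hukjne : ukj ≠ 0 := hune _
    field_simp [hGj, hGkj, hGb, hfj, hfkj, hujne, hukjne, htne]
    linear_combination (-2 * K j * K (k - j)) * ht2
  rw [h1, h2, Finset.sum_congr rfl h3, ← Finset.mul_sum, ← mul_add, mul_right_inj' hC]
end

section
/- Let β ∈ (−2, −1) and r > 1 be real numbers. Then the function x ↦ (1 − x^r − (1−x)^r) x^β (1−x)^β is integrable on (0,1) and ∫_0^1 (1 − x^r − (1−x)^r) x^β (1−x)^β dx = (2(2β+3)/(β+1)) B(β+2, β+2) − (2(2β+2+r)/(β+1)) B(β+1+r, β+2), where B(a,b) = Γ(a)Γ(b)/Γ(a+b) is the Beta function. -/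
open MeasureTheory Real

open Set

lemma stmt7_beta_aux {a b : ℝ} (ha : 0 < a) (hb : 0 < b) :
    IntegrableOn (fun x : ℝ => x ^ (a - 1) * (1 - x) ^ (b - 1)) (Ioo (0:ℝ) 1) ∧
    ∫ x in Ioo (0:ℝ) 1, x ^ (a - 1) * (1 - x) ^ (b - 1)
      = Real.Gamma a * Real.Gamma b / Real.Gamma (a + b) := by
  have ha' : 0 < (a : ℂ).re := by simpa using ha
  have hb' : 0 < (b : ℂ).re := by simpa using hb
  have heq : EqOn (fun x : ℝ => (x : ℂ) ^ ((a : ℂ) - 1) * ((1 : ℂ) - (x : ℂ)) ^ ((b : ℂ) - 1))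
      (fun x : ℝ => ((x ^ (a - 1) * (1 - x) ^ (b - 1) : ℝ) : ℂ)) (Icc (0:ℝ) 1) := by
    intro x hx
    have h1 : (0:ℝ) ≤ x := hx.1
    have h2 : (0:ℝ) ≤ 1 - x := by linarith [hx.2]
    simp only [Complex.ofReal_mul]
    rw [Complex.ofReal_cpow h1, Complex.ofReal_cpow h2]
    push_cast
    ring
  have hconv := Complex.betaIntegral_convergent ha' hb'
  have hIoc : IntegrableOn (fun x : ℝ => (x : ℂ) ^ ((a : ℂ) - 1) * ((1 : ℂ) - (x : ℂ)) ^ ((b : ℂ) - 1))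
      (Ioc (0:ℝ) 1) := (intervalIntegrable_iff_integrableOn_Ioc_of_le zero_le_one).mp hconv
  have hIoc' : IntegrableOn (fun x : ℝ => ((x ^ (a - 1) * (1 - x) ^ (b - 1) : ℝ) : ℂ)) (Ioc (0:ℝ) 1) :=
    hIoc.congr_fun (fun x hx => heq (Ioc_subset_Icc_self hx)) measurableSet_Ioc
  have hreal : IntegrableOn (fun x : ℝ => x ^ (a - 1) * (1 - x) ^ (b - 1)) (Ioc (0:ℝ) 1) := by
    simpa [IntegrableOn] using hIoc'.re
  refine ⟨hreal.mono_set Ioo_subset_Ioc_self, ?_⟩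
  have hbeta : Complex.betaIntegral a b
      = (((∫ x in Ioo (0:ℝ) 1, x ^ (a - 1) * (1 - x) ^ (b - 1)) : ℝ) : ℂ) := by
    rw [Complex.betaIntegral,
      intervalIntegral.integral_congr (g := fun x : ℝ => ((x ^ (a - 1) * (1 - x) ^ (b - 1) : ℝ) : ℂ))
        (by rwa [uIcc_of_le zero_le_one]),
      intervalIntegral.integral_ofReal, intervalIntegral.integral_of_le zero_le_one,
      integral_Ioc_eq_integral_Ioo]
  have hval := Complex.Gamma_mul_Gamma_eq_betaIntegral ha' hb'
  rw [hbeta, ← Complex.ofReal_add, Complex.Gamma_ofReal, Complex.Gamma_ofReal,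
    Complex.Gamma_ofReal, ← Complex.ofReal_mul, ← Complex.ofReal_mul] at hval
  have hval' : Real.Gamma a * Real.Gamma b
      = Real.Gamma (a + b) * ∫ x in Ioo (0:ℝ) 1, x ^ (a - 1) * (1 - x) ^ (b - 1) :=
    Complex.ofReal_inj.mp hval
  have hne : Real.Gamma (a + b) ≠ 0 := (Real.Gamma_pos_of_pos (by linarith)).ne'
  field_simp
  linarith [hval']


-- Bernoulli-type bound: for s > 0, 0 ≤ x ≤ 1:  0 ≤ 1 - x^s ≤ max 1 s * (1 - x)
lemma stmt7_key {s : ℝ} (hs : 0 < s) {x : ℝ} (hx0 : 0 ≤ x) (hx1 : x ≤ 1) :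
    0 ≤ 1 - x ^ s ∧ 1 - x ^ s ≤ max 1 s * (1 - x) := by
  constructor
  · have := Real.rpow_le_one hx0 hx1 hs.le; linarith
  · rcases le_total s 1 with h | h
    · have hxs : x ≤ x ^ s := by
        rcases eq_or_lt_of_le hx0 with rfl | hx0'
        · rw [Real.zero_rpow hs.ne']
        · calc x = x ^ (1:ℝ) := (Real.rpow_one x).symm
            _ ≤ x ^ s := Real.rpow_le_rpow_of_exponent_ge hx0' hx1 h
      calc 1 - x ^ s ≤ 1 - x := by linarith
        _ ≤ max 1 s * (1 - x) := le_mul_of_one_le_left (by linarith) (le_max_left 1 s)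
    · have hb := one_add_mul_self_le_rpow_one_add (s := x - 1) (by linarith) h
      rw [show (1:ℝ) + (x - 1) = x by ring] at hb
      calc 1 - x ^ s ≤ s * (1 - x) := by nlinarith
        _ ≤ max 1 s * (1 - x) := mul_le_mul_of_nonneg_right (le_max_right 1 s) (by linarith)

/-- For `β ∈ (-2,-1)` and `r > 1`, the function `x ↦ (1 - x^r - (1-x)^r) x^β (1-x)^β` is
integrable on `(0,1)` and its integral equals
`(2(2β+3)/(β+1)) B(β+2, β+2) - (2(2β+2+r)/(β+1)) B(β+1+r, β+2)`, where
`B(a,b) = Γ(a)Γ(b)/Γ(a+b)`. -/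
theorem stmt_7 (β r : ℝ) (hβ : β ∈ Set.Ioo (-2 : ℝ) (-1)) (hr : 1 < r) :
    IntegrableOn (fun x : ℝ => (1 - x ^ r - (1 - x) ^ r) * x ^ β * (1 - x) ^ β)
      (Set.Ioo 0 1) ∧
    (∫ x in Set.Ioo (0 : ℝ) 1, (1 - x ^ r - (1 - x) ^ r) * x ^ β * (1 - x) ^ β)
      = (2 * (2 * β + 3) / (β + 1)) *
          (Real.Gamma (β + 2) * Real.Gamma (β + 2) / Real.Gamma ((β + 2) + (β + 2)))
        - (2 * (2 * β + 2 + r) / (β + 1)) *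
          (Real.Gamma (β + 1 + r) * Real.Gamma (β + 2) /
            Real.Gamma ((β + 1 + r) + (β + 2))) := by
  obtain ⟨hβ1, hβ2⟩ := hβ
  have hb2 : (0:ℝ) < β + 2 := by linarith
  have hbr : (0:ℝ) < β + 1 + r := by linarith
  have hb1 : β + 1 < 0 := by linarith
  have hb1' : β + 1 ≠ 0 := hb1.ne
  set C : ℝ := max 1 (r - 1) with hC
  have hrpos : (0:ℝ) < r - 1 := by linarith
  -- beta integrals
  obtain ⟨intA1, valA1⟩ := stmt7_beta_aux hb2 hb2
  obtain ⟨intA2, valA2⟩ := stmt7_beta_aux hbr hb2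
  rw [show β + 2 - 1 = β + 1 by ring] at intA1 valA1 intA2 valA2
  rw [show β + 1 + r - 1 = β + r by ring] at intA2 valA2
  -- continuity / measurability helper
  have contOn : ∀ p : ℝ, ContinuousOn (fun x : ℝ => x ^ p) (Ioo (0:ℝ) 1) := fun p =>
    continuousOn_id.rpow_const (fun x hx => Or.inl hx.1.ne')
  have contOn' : ∀ p : ℝ, ContinuousOn (fun x : ℝ => (1 - x) ^ p) (Ioo (0:ℝ) 1) := fun p =>
    (continuousOn_const.sub continuousOn_id).rpow_const
      (fun x hx => Or.inl (by have := hx.2; intro h; simp at h; linarith))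
  -- integrability of h
  have meas_h : AEStronglyMeasurable (fun x : ℝ => (x ^ (β+1) - x ^ (β+r)) * (1-x) ^ β)
      (volume.restrict (Ioo (0:ℝ) 1)) :=
    (((contOn _).sub (contOn _)).mul (contOn' _)).aestronglyMeasurable measurableSet_Ioo
  have int_h : IntegrableOn (fun x : ℝ => (x ^ (β+1) - x ^ (β+r)) * (1-x) ^ β) (Ioo (0:ℝ) 1) := by
    apply Integrable.mono' (intA1.const_mul C) meas_h
    filter_upwards [ae_restrict_mem measurableSet_Ioo] with x hx
    obtain ⟨hx0, hx1⟩ := hx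
    have h1x : (0:ℝ) < 1 - x := by linarith
    obtain ⟨hnn, hle⟩ := stmt7_key hrpos hx0.le hx1.le
    have e1 : x ^ (β + r) = x ^ (β+1) * x ^ (r-1) := by
      rw [← Real.rpow_add hx0]; ring_nf
    have e2 : (1-x) ^ (β+1) = (1-x) ^ β * (1-x) := Real.rpow_add_one h1x.ne' β
    have p1 : (0:ℝ) ≤ x ^ (β+1) := (Real.rpow_pos_of_pos hx0 _).le
    have p2 : (0:ℝ) ≤ (1-x) ^ β := (Real.rpow_pos_of_pos h1x _).le
    have hfx : (x ^ (β+1) - x ^ (β+r)) * (1-x) ^ β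
        = x ^ (β+1) * (1 - x ^ (r-1)) * (1-x) ^ β := by rw [e1]; ring
    rw [Real.norm_eq_abs, hfx, abs_of_nonneg (by positivity)]
    rw [e2]
    nlinarith [mul_le_mul_of_nonneg_left hle (mul_nonneg p1 p2)]
  -- D = x * h pointwise, integrable
  have D_eq_xh : ∀ x ∈ Ioo (0:ℝ) 1, (x ^ (β+2) - x ^ (β+r+1)) * (1-x) ^ β
      = x * ((x ^ (β+1) - x ^ (β+r)) * (1-x) ^ β) := by
    intro x hx
    rw [show β + 2 = β + 1 + 1 by ring, Real.rpow_add_one hx.1.ne' (β+1),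
      Real.rpow_add_one hx.1.ne' (β+r)]
    ring
  have int_D : IntegrableOn (fun x : ℝ => (x ^ (β+2) - x ^ (β+r+1)) * (1-x) ^ β) (Ioo (0:ℝ) 1) := by
    apply Integrable.mono' int_h.abs
      ((((contOn _).sub (contOn _)).mul (contOn' _)).aestronglyMeasurable measurableSet_Ioo)
    filter_upwards [ae_restrict_mem measurableSet_Ioo] with x hx
    show ‖(x ^ (β+2) - x ^ (β+r+1)) * (1-x) ^ β‖ ≤ _
    rw [Real.norm_eq_abs, D_eq_xh x hx, abs_mul, abs_of_nonneg hx.1.le]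
    exact mul_le_of_le_one_left (abs_nonneg _) hx.2.le
  -- reflection of h is integrable
  have int_h_Ioc : IntegrableOn (fun x : ℝ => (x ^ (β+1) - x ^ (β+r)) * (1-x) ^ β) (Ioc (0:ℝ) 1) :=
    int_h.congr_set_ae Ioo_ae_eq_Ioc.symm
  have ii_h : IntervalIntegrable (fun x : ℝ => (x ^ (β+1) - x ^ (β+r)) * (1-x) ^ β) volume 0 1 :=
    (intervalIntegrable_iff_integrableOn_Ioc_of_le zero_le_one).mpr int_h_Ioc
  have int_hr : IntegrableOn
      (fun x : ℝ => ((1-x) ^ (β+1) - (1-x) ^ (β+r)) * (1-(1-x)) ^ β) (Ioo (0:ℝ) 1) := by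
    have := (ii_h.comp_sub_left 1).symm
    simp only [sub_zero, sub_self] at this
    exact ((intervalIntegrable_iff_integrableOn_Ioc_of_le zero_le_one).mp this).congr_set_ae
      Ioo_ae_eq_Ioc
  -- integral of reflection equals integral of h
  have refl_val : (∫ x in Ioo (0:ℝ) 1, ((1-x) ^ (β+1) - (1-x) ^ (β+r)) * (1-(1-x)) ^ β)
      = ∫ x in Ioo (0:ℝ) 1, (x ^ (β+1) - x ^ (β+r)) * (1-x) ^ β := by
    rw [← integral_Ioc_eq_integral_Ioo, ← integral_Ioc_eq_integral_Ioo,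
      ← intervalIntegral.integral_of_le zero_le_one, ← intervalIntegral.integral_of_le zero_le_one]
    simpa using intervalIntegral.integral_comp_sub_left (a := 0) (b := 1)
      (fun x : ℝ => (x ^ (β+1) - x ^ (β+r)) * (1-x) ^ β) 1
  -- g = h + h∘refl on Ioo
  have g_eq : EqOn
      (fun x : ℝ => (x ^ (β+1) - x ^ (β+r)) * (1-x) ^ β
        + ((1-x) ^ (β+1) - (1-x) ^ (β+r)) * (1-(1-x)) ^ β)
      (fun x : ℝ => (1 - x ^ r - (1 - x) ^ r) * x ^ β * (1 - x) ^ β) (Ioo (0:ℝ) 1) := by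
    intro x hx
    obtain ⟨hx0, hx1⟩ := hx
    have h1x : (0:ℝ) < 1 - x := by linarith
    simp only [sub_sub_cancel]
    rw [show β + 1 = β + 1 by ring, Real.rpow_add_one hx0.ne' β, Real.rpow_add_one h1x.ne' β,
      Real.rpow_add hx0 β r, Real.rpow_add h1x β r]
    ring
  have int_g : IntegrableOn (fun x : ℝ => (1 - x ^ r - (1 - x) ^ r) * x ^ β * (1 - x) ^ β)
      (Ioo (0:ℝ) 1) := IntegrableOn.congr_fun (int_h.add int_hr) g_eq measurableSet_Ioo
  refine ⟨int_g, ?_⟩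
  -- value of ∫ g
  have g_val : (∫ x in Ioo (0:ℝ) 1, (1 - x ^ r - (1 - x) ^ r) * x ^ β * (1 - x) ^ β)
      = 2 * ∫ x in Ioo (0:ℝ) 1, (x ^ (β+1) - x ^ (β+r)) * (1-x) ^ β := by
    rw [← setIntegral_congr_fun measurableSet_Ioo g_eq, integral_add int_h int_hr, refl_val]
    ring
  -- FTC for Φ
  have hderiv : ∀ x ∈ Ioo (0:ℝ) 1,
      HasDerivAt (fun y : ℝ => (y ^ (β+2) - y ^ (β+r+1)) * (1-y) ^ (β+1))
        ((β+2) * (x ^ (β+1) * (1-x) ^ (β+1)) - (β+r+1) * (x ^ (β+r) * (1-x) ^ (β+1))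
          - (β+1) * ((x ^ (β+2) - x ^ (β+r+1)) * (1-x) ^ β)) x := by
    intro x hx
    obtain ⟨hx0, hx1⟩ := hx
    have h1x : (0:ℝ) < 1 - x := by linarith
    have d1 : HasDerivAt (fun y : ℝ => y ^ (β+2) - y ^ (β+r+1))
        ((β+2) * x ^ (β+1) - (β+r+1) * x ^ (β+r)) x := by
      have t1 := Real.hasDerivAt_rpow_const (x := x) (p := β+2) (Or.inl hx0.ne')
      have t2 := Real.hasDerivAt_rpow_const (x := x) (p := β+r+1) (Or.inl hx0.ne')
      rw [show β + 2 - 1 = β + 1 by ring] at t1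
      rw [show β + r + 1 - 1 = β + r by ring] at t2
      exact t1.sub t2
    have d2 : HasDerivAt (fun y : ℝ => (1-y) ^ (β+1)) (-((β+1) * (1-x) ^ β)) x := by
      have t1 := Real.hasDerivAt_rpow_const (x := 1 - x) (p := β+1) (Or.inl h1x.ne')
      have t2 : HasDerivAt (fun y : ℝ => 1 - y) (-1 : ℝ) x := (hasDerivAt_id x).const_sub 1
      have := t1.comp x t2
      rw [show β + 1 - 1 = β by ring] at this
      convert this using 1
      all_goals first | rfl | ring
    convert d1.mul d2 using 1
    all_goals first | rfl | ring
  have int_Phi' : IntervalIntegrable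
      (fun x : ℝ => (β+2) * (x ^ (β+1) * (1-x) ^ (β+1)) - (β+r+1) * (x ^ (β+r) * (1-x) ^ (β+1))
        - (β+1) * ((x ^ (β+2) - x ^ (β+r+1)) * (1-x) ^ β)) volume 0 1 := by
    refine (intervalIntegrable_iff_integrableOn_Ioc_of_le zero_le_one).mpr
      (IntegrableOn.congr_set_ae ?_ Ioo_ae_eq_Ioc.symm)
    exact ((intA1.const_mul _).sub (intA2.const_mul _)).sub (int_D.const_mul _)
  have tend0 : Filter.Tendsto (fun y : ℝ => (y ^ (β+2) - y ^ (β+r+1)) * (1-y) ^ (β+1))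
      (nhdsWithin 0 (Ioi 0)) (nhds 0) := by
    have hc : ContinuousAt (fun y : ℝ => (y ^ (β+2) - y ^ (β+r+1)) * (1-y) ^ (β+1)) 0 := by
      have c1 := Real.continuousAt_rpow_const 0 (β+2) (Or.inr hb2.le)
      have c2 := Real.continuousAt_rpow_const 0 (β+r+1) (Or.inr (by linarith))
      have c3 : ContinuousAt (fun y : ℝ => (1-y) ^ (β+1)) 0 :=
        (continuous_const.sub continuous_id).continuousAt.rpow_const (by norm_num)
      exact ((c1.sub c2).mul c3)
    simpa [Real.zero_rpow hb2.ne', Real.zero_rpow (show (0:ℝ) < β + r + 1 by linarith).ne']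
      using (hc.tendsto.mono_left nhdsWithin_le_nhds)
  have tend1 : Filter.Tendsto (fun y : ℝ => (y ^ (β+2) - y ^ (β+r+1)) * (1-y) ^ (β+1))
      (nhdsWithin 1 (Iio 1)) (nhds 0) := by
    have hU : Filter.Tendsto (fun y : ℝ => C * (y ^ (β+2) * (1-y) ^ (β+2)))
        (nhdsWithin 1 (Iio 1)) (nhds 0) := by
      have c1 := Real.continuousAt_rpow_const 1 (β+2) (Or.inl one_ne_zero)
      have c2 : ContinuousAt (fun y : ℝ => (1-y) ^ (β+2)) 1 :=
        (continuous_const.sub continuous_id).continuousAt.rpow_const (Or.inr hb2.le)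
      have hc := (continuousAt_const (y := C)).mul (c1.mul c2)
      have h' : Filter.Tendsto (fun y : ℝ => C * (y ^ (β+2) * (1-y) ^ (β+2))) (nhdsWithin 1 (Iio 1))
          (nhds (C * ((1:ℝ) ^ (β+2) * (1-1) ^ (β+2)))) := hc.tendsto.mono_left nhdsWithin_le_nhds
      simpa [Real.zero_rpow hb2.ne'] using h'
    have hmem : Ioo (0:ℝ) 1 ∈ nhdsWithin (1:ℝ) (Iio 1) :=
      Ioo_mem_nhdsLT (by norm_num)
    refine tendsto_of_tendsto_of_tendsto_of_le_of_le' tendsto_const_nhds hU ?_ ?_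
    · filter_upwards [hmem] with x hx
      have h1x : (0:ℝ) < 1 - x := by linarith [hx.2]
      have : x ^ (β+r+1) ≤ x ^ (β+2) :=
        Real.rpow_le_rpow_of_exponent_ge hx.1 hx.2.le (by linarith)
      have p2 : (0:ℝ) ≤ (1-x) ^ (β+1) := (Real.rpow_pos_of_pos h1x _).le
      nlinarith
    · filter_upwards [hmem] with x hx
      have h1x : (0:ℝ) < 1 - x := by linarith [hx.2]
      obtain ⟨hnn, hle⟩ := stmt7_key hrpos hx.1.le hx.2.le
      have e1 : x ^ (β+r+1) = x ^ (β+2) * x ^ (r-1) := by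
        rw [← Real.rpow_add hx.1]; ring_nf
      have e2 : (1-x) ^ (β+2) = (1-x) ^ (β+1) * (1-x) := by
        rw [show β + 2 = β + 1 + 1 by ring]; exact Real.rpow_add_one h1x.ne' (β+1)
      have p1 : (0:ℝ) ≤ x ^ (β+2) := (Real.rpow_pos_of_pos hx.1 _).le
      have p2 : (0:ℝ) ≤ (1-x) ^ (β+1) := (Real.rpow_pos_of_pos h1x _).le
      rw [e1, e2]
      nlinarith [mul_le_mul_of_nonneg_left hle (mul_nonneg p1 p2)]
  have hFTC : (∫ x in (0:ℝ)..1,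
      ((β+2) * (x ^ (β+1) * (1-x) ^ (β+1)) - (β+r+1) * (x ^ (β+r) * (1-x) ^ (β+1))
        - (β+1) * ((x ^ (β+2) - x ^ (β+r+1)) * (1-x) ^ β))) = 0 := by
    rw [intervalIntegral.integral_eq_sub_of_hasDerivAt_of_tendsto one_pos hderiv int_Phi'
      tend0 tend1]
    simp
  -- convert FTC to Ioo and split linearly
  have hIoo0 : (∫ x in Ioo (0:ℝ) 1,
      ((β+2) * (x ^ (β+1) * (1-x) ^ (β+1)) - (β+r+1) * (x ^ (β+r) * (1-x) ^ (β+1))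
        - (β+1) * ((x ^ (β+2) - x ^ (β+r+1)) * (1-x) ^ β))) = 0 := by
    rw [← integral_Ioc_eq_integral_Ioo, ← intervalIntegral.integral_of_le zero_le_one]
    exact hFTC
  have ints1 : IntegrableOn (fun x : ℝ => (β+2) * (x ^ (β+1) * (1-x) ^ (β+1))
      - (β+r+1) * (x ^ (β+r) * (1-x) ^ (β+1))) (Ioo (0:ℝ) 1) :=
    (intA1.const_mul _).sub (intA2.const_mul _)
  rw [integral_sub ints1 (int_D.const_mul _),
    integral_sub (intA1.const_mul _) (intA2.const_mul _),
    integral_const_mul, integral_const_mul, integral_const_mul] at hIoo0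
  -- D = h - A1 + A2 pointwise
  have D_val : (∫ x in Ioo (0:ℝ) 1, (x ^ (β+2) - x ^ (β+r+1)) * (1-x) ^ β)
      = (∫ x in Ioo (0:ℝ) 1, (x ^ (β+1) - x ^ (β+r)) * (1-x) ^ β)
        - (∫ x in Ioo (0:ℝ) 1, x ^ (β+1) * (1-x) ^ (β+1))
        + (∫ x in Ioo (0:ℝ) 1, x ^ (β+r) * (1-x) ^ (β+1)) := by
    have step : (∫ x in Ioo (0:ℝ) 1, (x ^ (β+2) - x ^ (β+r+1)) * (1-x) ^ β)
        = ∫ x in Ioo (0:ℝ) 1, ((x ^ (β+1) - x ^ (β+r)) * (1-x) ^ β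
            - x ^ (β+1) * (1-x) ^ (β+1) + x ^ (β+r) * (1-x) ^ (β+1)) := by
      apply setIntegral_congr_fun measurableSet_Ioo
      intro x hx
      obtain ⟨hx0, hx1⟩ := hx
      have h1x : (0:ℝ) < 1 - x := by linarith
      simp only [show β + 2 = β + 1 + 1 from by ring, Real.rpow_add_one hx0.ne',
        Real.rpow_add_one h1x.ne']
      ring
    have ints2 : IntegrableOn (fun x : ℝ => (x ^ (β+1) - x ^ (β+r)) * (1-x) ^ β
        - x ^ (β+1) * (1-x) ^ (β+1)) (Ioo (0:ℝ) 1) := int_h.sub intA1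
    rw [step, integral_add ints2 intA2, integral_sub int_h intA1]
  rw [D_val] at hIoo0
  rw [valA1, valA2] at hIoo0
  have hIH : (β + 1) * (∫ x in Ioo (0:ℝ) 1, (x ^ (β+1) - x ^ (β+r)) * (1-x) ^ β)
      = (2*β+3) * (Gamma (β + 2) * Gamma (β + 2) / Gamma (β + 2 + (β + 2)))
        - (2*β+2+r) * (Gamma (β + 1 + r) * Gamma (β + 2) / Gamma (β + 1 + r + (β + 2))) := by
    linear_combination -hIoo0
  have h2 : (∫ x in Ioo (0:ℝ) 1, (x ^ (β+1) - x ^ (β+r)) * (1-x) ^ β)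
      = ((2*β+3) * (Gamma (β + 2) * Gamma (β + 2) / Gamma (β + 2 + (β + 2)))
        - (2*β+2+r) * (Gamma (β + 1 + r) * Gamma (β + 2) / Gamma (β + 1 + r + (β + 2)))) / (β+1) := by
    rw [eq_div_iff hb1']
    linear_combination hIH
  rw [g_val, h2]
  ring
end
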